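/- arXiv:2012.00327 — 2 statements merged into one kernel-verified Lean document; each statement's English description precedes it below -/
import Mathlib

section
/- (Theorem 2(B).) Let Δ = π/4 or Δ = −3π/4, let Ũ be the 4-state LQW time evolution with coin matrix M̃(Δ), and let the initial state be ψ₀(x) = (φ₁, φ₂, φ₃, φ₄)ᵀ·δ₀(x). Set j = 0 if Δ = π/4 and j = 1 if Δ = −3π/4. Then for every m ∈ ℤ≥0 and x ∈ ℤ: (Ũ^{4m}ψ₀)(x) = (φ₁,φ₂,φ₃,φ₄)ᵀ δ₀(x); (Ũ^{4m+1}ψ₀)(x) = ((−1)^j/2)·(φ₁+φ₂−φ₃+φ₄, 0, φ₁−φ₂−φ₃−φ₄, 0)ᵀ δ₋₁(x) + ((−1)^j/2)·(0, φ₁+φ₂+φ₃−φ₄, 0, −φ₁+φ₂−φ₃−φ₄)ᵀ δ₁(x); (Ũ^{4m+2}ψ₀)(x) = (1/2)·(φ₂+φ₄, 0, φ₂+φ₄, 0)ᵀ δ₋₂(x) + (1/2)·(φ₂−φ₄, φ₁−φ₃, φ₄−φ₂, φ₃−φ₁)ᵀ δ₀(x) + (1/2)·(0, φ₁+φ₃,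 0, φ₁+φ₃)ᵀ δ₂(x); and (Ũ^{4m+3}ψ₀)(x) = ((−1)^j/2)·(φ₂−φ₄, φ₂+φ₄, φ₂−φ₄, −φ₂−φ₄)ᵀ δ₋₁(x) + ((−1)^j/2)·(φ₁+φ₃, φ₁−φ₃, −φ₁−φ₃, φ₁−φ₃)ᵀ δ₁(x). -/
open Matrix Real

noncomputable section

/-- The coin matrix `M̃(Δ)` of the one-parameter family of 4-state Grover walks. -/
def MtildeGrover (Δ : ℝ) : Matrix (Fin 4) (Fin 4) ℂ :=
  ((Real.sqrt 2)⁻¹ : ℂ) •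
    !![(Real.cos Δ : ℂ), (Real.sin Δ : ℂ), -(Real.cos Δ : ℂ), (Real.sin Δ : ℂ);
       (Real.sin Δ : ℂ), (Real.cos Δ : ℂ), (Real.sin Δ : ℂ), -(Real.cos Δ : ℂ);
       (Real.sin Δ : ℂ), -(Real.cos Δ : ℂ), -(Real.sin Δ : ℂ), -(Real.cos Δ : ℂ);
       -(Real.cos Δ : ℂ), (Real.sin Δ : ℂ), -(Real.cos Δ : ℂ), -(Real.sin Δ : ℂ)]

/-- The time evolution of the 4-state LQW on `ℤ` with coin matrix `M`:
`(Ũψ)(x) = P̃·ψ(x+1) + Q̃·ψ(x−1)` where `P̃` retains rows 1 and 3 of `M` and `Q̃` retains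
rows 2 and 4. -/
def lqwU4 (M : Matrix (Fin 4) (Fin 4) ℂ) (ψ : ℤ → Fin 4 → ℂ) : ℤ → Fin 4 → ℂ := fun x =>
  (Matrix.of ![M 0, (0 : Fin 4 → ℂ), M 2, (0 : Fin 4 → ℂ)]).mulVec (ψ (x + 1))
    + (Matrix.of ![(0 : Fin 4 → ℂ), M 1, (0 : Fin 4 → ℂ), M 3]).mulVec (ψ (x - 1))

/-- `δ_{x₀}(x)`: `1` if `x = x₀` and `0` otherwise. -/
def dlt (x₀ x : ℤ) : ℂ := if x = x₀ then 1 else 0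

/-! ### Auxiliary material -/

def Meps (ε : ℂ) : Matrix (Fin 4) (Fin 4) ℂ :=
  !![ε/2, ε/2, -(ε/2), ε/2;
     ε/2, ε/2, ε/2, -(ε/2);
     ε/2, -(ε/2), -(ε/2), -(ε/2);
     -(ε/2), ε/2, -(ε/2), -(ε/2)]

lemma entry_pos : ((Real.sqrt 2 : ℝ) : ℂ)⁻¹ * (((Real.sqrt 2 : ℝ) : ℂ) / 2) = (1:ℂ)/2 := by
  have h : ((Real.sqrt 2 : ℝ) : ℂ) ≠ 0 := by
    simp [Real.sqrt_eq_zero']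
  field_simp

lemma M_eq_pos : MtildeGrover (π/4) = Meps 1 := by
  have h1 : ((Real.cos (π/4) : ℝ) : ℂ) = ((Real.sqrt 2 : ℝ) : ℂ) / 2 := by
    rw [Real.cos_pi_div_four]; push_cast; ring
  have h2 : ((Real.sin (π/4) : ℝ) : ℂ) = ((Real.sqrt 2 : ℝ) : ℂ) / 2 := by
    rw [Real.sin_pi_div_four]; push_cast; ring
  ext i k
  fin_cases i <;> fin_cases k <;>
    simp only [MtildeGrover, Meps, Matrix.smul_apply, Matrix.cons_val', Matrix.cons_val_zero,
      Matrix.cons_val_one, Matrix.head_cons, Matrix.empty_val', Matrix.cons_val_fin_one,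
      Matrix.head_fin_const, Matrix.cons_val_two, Matrix.cons_val_three, Matrix.tail_cons,
      Matrix.of_apply, smul_eq_mul, h1, h2, mul_neg, neg_inj, entry_pos, Fin.reduceFinMk, Fin.isValue] <;>
    first
      | rfl
      | exact entry_pos
      | exact congrArg Neg.neg entry_pos
      | norm_num

lemma M_eq_neg : MtildeGrover (-3*π/4) = Meps (-1) := by
  have c1 : Real.cos (-3*π/4) = -(Real.sqrt 2 / 2) := by
    rw [show (-3:ℝ)*π/4 = -(π - π/4) by ring, Real.cos_neg, Real.cos_pi_sub,
      Real.cos_pi_div_four]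
  have s1 : Real.sin (-3*π/4) = -(Real.sqrt 2 / 2) := by
    rw [show (-3:ℝ)*π/4 = -(π - π/4) by ring, Real.sin_neg, Real.sin_pi_sub,
      Real.sin_pi_div_four]
  have h1 : ((Real.cos (-3*π/4) : ℝ) : ℂ) = -(((Real.sqrt 2 : ℝ) : ℂ) / 2) := by
    rw [c1]; push_cast; ring
  have h2 : ((Real.sin (-3*π/4) : ℝ) : ℂ) = -(((Real.sqrt 2 : ℝ) : ℂ) / 2) := by
    rw [s1]; push_cast; ring
  ext i k
  fin_cases i <;> fin_cases k <;>
    simp only [MtildeGrover, Meps, Matrix.smul_apply, Matrix.cons_val', Matrix.cons_val_zero,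
      Matrix.cons_val_one, Matrix.head_cons, Matrix.empty_val', Matrix.cons_val_fin_one,
      Matrix.head_fin_const, Matrix.cons_val_two, Matrix.cons_val_three, Matrix.tail_cons,
      Matrix.of_apply, smul_eq_mul, h1, h2, mul_neg, neg_neg, neg_inj, entry_pos, Fin.reduceFinMk, Fin.isValue] <;>
    first
      | rfl
      | exact entry_pos
      | exact congrArg Neg.neg entry_pos
      | norm_num

def psi0 (φ₁ φ₂ φ₃ φ₄ : ℂ) : ℤ → Fin 4 → ℂ := fun x =>
  dlt 0 x • ![φ₁, φ₂, φ₃, φ₄]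

def psi1 (ε φ₁ φ₂ φ₃ φ₄ : ℂ) : ℤ → Fin 4 → ℂ := fun x =>
  (ε / 2) •
    (dlt (-1) x • ![φ₁ + φ₂ - φ₃ + φ₄, 0, φ₁ - φ₂ - φ₃ - φ₄, 0]
      + dlt 1 x • ![0, φ₁ + φ₂ + φ₃ - φ₄, 0, -φ₁ + φ₂ - φ₃ - φ₄])

def psi2 (φ₁ φ₂ φ₃ φ₄ : ℂ) : ℤ → Fin 4 → ℂ := fun x =>
  (1 / 2 : ℂ) •
    (dlt (-2) x • ![φ₂ + φ₄, 0, φ₂ + φ₄, 0]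
      + dlt 0 x • ![φ₂ - φ₄, φ₁ - φ₃, φ₄ - φ₂, φ₃ - φ₁]
      + dlt 2 x • ![0, φ₁ + φ₃, 0, φ₁ + φ₃])

def psi3 (ε φ₁ φ₂ φ₃ φ₄ : ℂ) : ℤ → Fin 4 → ℂ := fun x =>
  (ε / 2) •
    (dlt (-1) x • ![φ₂ - φ₄, φ₂ + φ₄, φ₂ - φ₄, -φ₂ - φ₄]
      + dlt 1 x • ![φ₁ + φ₃, φ₁ - φ₃, -φ₁ - φ₃, φ₁ - φ₃])

section Steps
variable (ε φ₁ φ₂ φ₃ φ₄ : ℂ)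

lemma step0 : lqwU4 (Meps ε) (psi0 φ₁ φ₂ φ₃ φ₄) = psi1 ε φ₁ φ₂ φ₃ φ₄ := by
  funext x
  by_cases hA : x = -1
  · subst hA
    funext i
    fin_cases i <;>
      simp only [lqwU4, Meps, psi0, psi1, dlt, Matrix.mulVec, dotProduct,
        Fin.sum_univ_four, Matrix.of_apply, Matrix.cons_val', Matrix.cons_val_zero,
        Matrix.cons_val_one, Matrix.head_cons, Matrix.cons_val_two, Matrix.cons_val_three,
        Matrix.tail_cons, Matrix.empty_val', Matrix.cons_val_fin_one, Matrix.head_fin_const,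
        Pi.add_apply, Pi.smul_apply, Pi.zero_apply, smul_eq_mul, Fin.isValue, Fin.reduceFinMk,
          Int.reduceNeg, Int.reduceAdd, Int.reduceSub, Int.reduceEq, reduceIte] <;> ring
  · by_cases hB : x = 1
    · subst hB
      funext i
      fin_cases i <;>
        simp only [lqwU4, Meps, psi0, psi1, dlt, Matrix.mulVec, dotProduct,
          Fin.sum_univ_four, Matrix.of_apply, Matrix.cons_val', Matrix.cons_val_zero,
          Matrix.cons_val_one, Matrix.head_cons, Matrix.cons_val_two, Matrix.cons_val_three,
          Matrix.tail_cons, Matrix.empty_val', Matrix.cons_val_fin_one, Matrix.head_fin_const,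
          Pi.add_apply, Pi.smul_apply, Pi.zero_apply, smul_eq_mul, Fin.isValue, Fin.reduceFinMk,
          Int.reduceNeg, Int.reduceAdd, Int.reduceSub, Int.reduceEq, reduceIte] <;> ring
    · funext i
      fin_cases i <;>
        · simp only [lqwU4, Meps, psi0, psi1, dlt, Matrix.mulVec, dotProduct,
            Fin.sum_univ_four, Matrix.of_apply, Matrix.cons_val', Matrix.cons_val_zero,
            Matrix.cons_val_one, Matrix.head_cons, Matrix.cons_val_two, Matrix.cons_val_three,
            Matrix.tail_cons, Matrix.empty_val', Matrix.cons_val_fin_one, Matrix.head_fin_const,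
            Pi.add_apply, Pi.smul_apply, Pi.zero_apply, smul_eq_mul, Fin.isValue,
            Fin.reduceFinMk,
            if_neg (show ¬(x + 1 = 0) by omega), if_neg (show ¬(x - 1 = 0) by omega),
            if_neg (show ¬(x = -1) from hA), if_neg (show ¬(x = 1) from hB)]
          ring

lemma step1 (hε : ε = 1 ∨ ε = -1) :
    lqwU4 (Meps ε) (psi1 ε φ₁ φ₂ φ₃ φ₄) = psi2 φ₁ φ₂ φ₃ φ₄ := by
  funext x
  rcases hε with rfl | rfl <;>
  · by_cases hA : x = -2
    · subst hA
      funext i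
      fin_cases i <;>
        simp only [lqwU4, Meps, psi1, psi2, dlt, Matrix.mulVec, dotProduct,
          Fin.sum_univ_four, Matrix.of_apply, Matrix.cons_val', Matrix.cons_val_zero,
          Matrix.cons_val_one, Matrix.head_cons, Matrix.cons_val_two, Matrix.cons_val_three,
          Matrix.tail_cons, Matrix.empty_val', Matrix.cons_val_fin_one, Matrix.head_fin_const,
          Pi.add_apply, Pi.smul_apply, Pi.zero_apply, smul_eq_mul, Fin.isValue, Fin.reduceFinMk,
          Int.reduceNeg, Int.reduceAdd, Int.reduceSub, Int.reduceEq, reduceIte] <;> ring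
    · by_cases hB : x = 0
      · subst hB
        funext i
        fin_cases i <;>
          simp only [lqwU4, Meps, psi1, psi2, dlt, Matrix.mulVec, dotProduct,
            Fin.sum_univ_four, Matrix.of_apply, Matrix.cons_val', Matrix.cons_val_zero,
            Matrix.cons_val_one, Matrix.head_cons, Matrix.cons_val_two, Matrix.cons_val_three,
            Matrix.tail_cons, Matrix.empty_val', Matrix.cons_val_fin_one, Matrix.head_fin_const,
            Pi.add_apply, Pi.smul_apply, Pi.zero_apply, smul_eq_mul, Fin.isValue, Fin.reduceFinMk,
          Int.reduceNeg, Int.reduceAdd, Int.reduceSub, Int.reduceEq, reduceIte] <;> ring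
      · by_cases hC : x = 2
        · subst hC
          funext i
          fin_cases i <;>
            simp only [lqwU4, Meps, psi1, psi2, dlt, Matrix.mulVec, dotProduct,
              Fin.sum_univ_four, Matrix.of_apply, Matrix.cons_val', Matrix.cons_val_zero,
              Matrix.cons_val_one, Matrix.head_cons, Matrix.cons_val_two, Matrix.cons_val_three,
              Matrix.tail_cons, Matrix.empty_val', Matrix.cons_val_fin_one,
              Matrix.head_fin_const, Pi.add_apply, Pi.smul_apply, Pi.zero_apply,
              smul_eq_mul, Fin.isValue, Fin.reduceFinMk,
          Int.reduceNeg, Int.reduceAdd, Int.reduceSub, Int.reduceEq, reduceIte] <;> ring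
        · funext i
          fin_cases i <;>
            · simp only [lqwU4, Meps, psi1, psi2, dlt, Matrix.mulVec, dotProduct,
                Fin.sum_univ_four, Matrix.of_apply, Matrix.cons_val', Matrix.cons_val_zero,
                Matrix.cons_val_one, Matrix.head_cons, Matrix.cons_val_two,
                Matrix.cons_val_three, Matrix.tail_cons, Matrix.empty_val',
                Matrix.cons_val_fin_one, Matrix.head_fin_const, Pi.add_apply, Pi.smul_apply,
                Pi.zero_apply, smul_eq_mul, Fin.isValue, Fin.reduceFinMk,
                if_neg (show ¬(x + 1 = -1) by omega), if_neg (show ¬(x + 1 = 1) by omega),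
                if_neg (show ¬(x - 1 = -1) by omega), if_neg (show ¬(x - 1 = 1) by omega),
                if_neg (show ¬(x = -2) from hA), if_neg (show ¬(x = 0) from hB),
                if_neg (show ¬(x = 2) from hC)]
              ring

lemma step2 : lqwU4 (Meps ε) (psi2 φ₁ φ₂ φ₃ φ₄) = psi3 ε φ₁ φ₂ φ₃ φ₄ := by
  funext x
  by_cases hA : x = -3
  · subst hA
    funext i
    fin_cases i <;>
      simp only [lqwU4, Meps, psi2, psi3, dlt, Matrix.mulVec, dotProduct,
        Fin.sum_univ_four, Matrix.of_apply, Matrix.cons_val', Matrix.cons_val_zero,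
        Matrix.cons_val_one, Matrix.head_cons, Matrix.cons_val_two, Matrix.cons_val_three,
        Matrix.tail_cons, Matrix.empty_val', Matrix.cons_val_fin_one, Matrix.head_fin_const,
        Pi.add_apply, Pi.smul_apply, Pi.zero_apply, smul_eq_mul, Fin.isValue, Fin.reduceFinMk,
          Int.reduceNeg, Int.reduceAdd, Int.reduceSub, Int.reduceEq, reduceIte] <;> ring
  · by_cases hB : x = -1
    · subst hB
      funext i
      fin_cases i <;>
        simp only [lqwU4, Meps, psi2, psi3, dlt, Matrix.mulVec, dotProduct,
          Fin.sum_univ_four, Matrix.of_apply, Matrix.cons_val', Matrix.cons_val_zero,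
          Matrix.cons_val_one, Matrix.head_cons, Matrix.cons_val_two, Matrix.cons_val_three,
          Matrix.tail_cons, Matrix.empty_val', Matrix.cons_val_fin_one, Matrix.head_fin_const,
          Pi.add_apply, Pi.smul_apply, Pi.zero_apply, smul_eq_mul, Fin.isValue, Fin.reduceFinMk,
          Int.reduceNeg, Int.reduceAdd, Int.reduceSub, Int.reduceEq, reduceIte] <;> ring
    · by_cases hC : x = 1
      · subst hC
        funext i
        fin_cases i <;>
          simp only [lqwU4, Meps, psi2, psi3, dlt, Matrix.mulVec, dotProduct,
            Fin.sum_univ_four, Matrix.of_apply, Matrix.cons_val', Matrix.cons_val_zero,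
            Matrix.cons_val_one, Matrix.head_cons, Matrix.cons_val_two, Matrix.cons_val_three,
            Matrix.tail_cons, Matrix.empty_val', Matrix.cons_val_fin_one, Matrix.head_fin_const,
            Pi.add_apply, Pi.smul_apply, Pi.zero_apply, smul_eq_mul, Fin.isValue, Fin.reduceFinMk,
          Int.reduceNeg, Int.reduceAdd, Int.reduceSub, Int.reduceEq, reduceIte] <;> ring
      · by_cases hD : x = 3
        · subst hD
          funext i
          fin_cases i <;>
            simp only [lqwU4, Meps, psi2, psi3, dlt, Matrix.mulVec, dotProduct,
              Fin.sum_univ_four, Matrix.of_apply, Matrix.cons_val', Matrix.cons_val_zero,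
              Matrix.cons_val_one, Matrix.head_cons, Matrix.cons_val_two, Matrix.cons_val_three,
              Matrix.tail_cons, Matrix.empty_val', Matrix.cons_val_fin_one,
              Matrix.head_fin_const, Pi.add_apply, Pi.smul_apply, Pi.zero_apply,
              smul_eq_mul, Fin.isValue, Fin.reduceFinMk,
          Int.reduceNeg, Int.reduceAdd, Int.reduceSub, Int.reduceEq, reduceIte] <;> ring
        · funext i
          fin_cases i <;>
            · simp only [lqwU4, Meps, psi2, psi3, dlt, Matrix.mulVec, dotProduct,
                Fin.sum_univ_four, Matrix.of_apply, Matrix.cons_val', Matrix.cons_val_zero,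
                Matrix.cons_val_one, Matrix.head_cons, Matrix.cons_val_two,
                Matrix.cons_val_three, Matrix.tail_cons, Matrix.empty_val',
                Matrix.cons_val_fin_one, Matrix.head_fin_const, Pi.add_apply, Pi.smul_apply,
                Pi.zero_apply, smul_eq_mul, Fin.isValue, Fin.reduceFinMk,
                if_neg (show ¬(x + 1 = -2) by omega), if_neg (show ¬(x + 1 = 0) by omega),
                if_neg (show ¬(x + 1 = 2) by omega), if_neg (show ¬(x - 1 = -2) by omega),
                if_neg (show ¬(x - 1 = 0) by omega), if_neg (show ¬(x - 1 = 2) by omega),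
                if_neg (show ¬(x = -1) from hB), if_neg (show ¬(x = 1) from hC)]
              ring

lemma step3 (hε : ε = 1 ∨ ε = -1) :
    lqwU4 (Meps ε) (psi3 ε φ₁ φ₂ φ₃ φ₄) = psi0 φ₁ φ₂ φ₃ φ₄ := by
  funext x
  rcases hε with rfl | rfl <;>
  · by_cases hA : x = -2
    · subst hA
      funext i
      fin_cases i <;>
        simp only [lqwU4, Meps, psi3, psi0, dlt, Matrix.mulVec, dotProduct,
          Fin.sum_univ_four, Matrix.of_apply, Matrix.cons_val', Matrix.cons_val_zero,
          Matrix.cons_val_one, Matrix.head_cons, Matrix.cons_val_two, Matrix.cons_val_three,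
          Matrix.tail_cons, Matrix.empty_val', Matrix.cons_val_fin_one, Matrix.head_fin_const,
          Pi.add_apply, Pi.smul_apply, Pi.zero_apply, smul_eq_mul, Fin.isValue, Fin.reduceFinMk,
          Int.reduceNeg, Int.reduceAdd, Int.reduceSub, Int.reduceEq, reduceIte] <;> ring
    · by_cases hB : x = 0
      · subst hB
        funext i
        fin_cases i <;>
          simp only [lqwU4, Meps, psi3, psi0, dlt, Matrix.mulVec, dotProduct,
            Fin.sum_univ_four, Matrix.of_apply, Matrix.cons_val', Matrix.cons_val_zero,
            Matrix.cons_val_one, Matrix.head_cons, Matrix.cons_val_two, Matrix.cons_val_three,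
            Matrix.tail_cons, Matrix.empty_val', Matrix.cons_val_fin_one, Matrix.head_fin_const,
            Pi.add_apply, Pi.smul_apply, Pi.zero_apply, smul_eq_mul, Fin.isValue, Fin.reduceFinMk,
          Int.reduceNeg, Int.reduceAdd, Int.reduceSub, Int.reduceEq, reduceIte] <;> ring
      · by_cases hC : x = 2
        · subst hC
          funext i
          fin_cases i <;>
            simp only [lqwU4, Meps, psi3, psi0, dlt, Matrix.mulVec, dotProduct,
              Fin.sum_univ_four, Matrix.of_apply, Matrix.cons_val', Matrix.cons_val_zero,
              Matrix.cons_val_one, Matrix.head_cons, Matrix.cons_val_two, Matrix.cons_val_three,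
              Matrix.tail_cons, Matrix.empty_val', Matrix.cons_val_fin_one,
              Matrix.head_fin_const, Pi.add_apply, Pi.smul_apply, Pi.zero_apply,
              smul_eq_mul, Fin.isValue, Fin.reduceFinMk,
          Int.reduceNeg, Int.reduceAdd, Int.reduceSub, Int.reduceEq, reduceIte] <;> ring
        · funext i
          fin_cases i <;>
            · simp only [lqwU4, Meps, psi3, psi0, dlt, Matrix.mulVec, dotProduct,
                Fin.sum_univ_four, Matrix.of_apply, Matrix.cons_val', Matrix.cons_val_zero,
                Matrix.cons_val_one, Matrix.head_cons, Matrix.cons_val_two,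
                Matrix.cons_val_three, Matrix.tail_cons, Matrix.empty_val',
                Matrix.cons_val_fin_one, Matrix.head_fin_const, Pi.add_apply, Pi.smul_apply,
                Pi.zero_apply, smul_eq_mul, Fin.isValue, Fin.reduceFinMk,
                if_neg (show ¬(x + 1 = -1) by omega), if_neg (show ¬(x + 1 = 1) by omega),
                if_neg (show ¬(x - 1 = -1) by omega), if_neg (show ¬(x - 1 = 1) by omega),
                if_neg (show ¬(x = 0) from hB)]
              ring
lemma key (hε : ε = 1 ∨ ε = -1) : ∀ m : ℕ,
    (lqwU4 (Meps ε))^[4 * m] (psi0 φ₁ φ₂ φ₃ φ₄) = psi0 φ₁ φ₂ φ₃ φ₄ ∧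
    (lqwU4 (Meps ε))^[4 * m + 1] (psi0 φ₁ φ₂ φ₃ φ₄) = psi1 ε φ₁ φ₂ φ₃ φ₄ ∧
    (lqwU4 (Meps ε))^[4 * m + 2] (psi0 φ₁ φ₂ φ₃ φ₄) = psi2 φ₁ φ₂ φ₃ φ₄ ∧
    (lqwU4 (Meps ε))^[4 * m + 3] (psi0 φ₁ φ₂ φ₃ φ₄) = psi3 ε φ₁ φ₂ φ₃ φ₄ := by
  intro m
  induction m with
  | zero =>
    refine ⟨by simp, ?_, ?_, ?_⟩
    · simpa using step0 ε φ₁ φ₂ φ₃ φ₄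
    · show (lqwU4 (Meps ε))^[0 + 1 + 1] _ = _
      rw [Function.iterate_succ_apply', Function.iterate_succ_apply',
        Function.iterate_zero_apply, step0, step1 ε φ₁ φ₂ φ₃ φ₄ hε]
    · show (lqwU4 (Meps ε))^[0 + 1 + 1 + 1] _ = _
      rw [Function.iterate_succ_apply', Function.iterate_succ_apply',
        Function.iterate_succ_apply', Function.iterate_zero_apply, step0,
        step1 ε φ₁ φ₂ φ₃ φ₄ hε, step2]
  | succ m ih =>
    obtain ⟨h0, h1, h2, h3⟩ := ih
    have e0 : (lqwU4 (Meps ε))^[4 * (m + 1)] (psi0 φ₁ φ₂ φ₃ φ₄) = psi0 φ₁ φ₂ φ₃ φ₄ := by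
      rw [show 4 * (m + 1) = 4 * m + 3 + 1 by ring, Function.iterate_succ_apply', h3,
        step3 ε φ₁ φ₂ φ₃ φ₄ hε]
    refine ⟨e0, ?_, ?_, ?_⟩
    · rw [Function.iterate_succ_apply', e0, step0]
    · rw [show 4 * (m + 1) + 2 = 4 * (m + 1) + 1 + 1 by ring, Function.iterate_succ_apply',
        Function.iterate_succ_apply', e0, step0, step1 ε φ₁ φ₂ φ₃ φ₄ hε]
    · rw [show 4 * (m + 1) + 3 = 4 * (m + 1) + 1 + 1 + 1 by ring,
        Function.iterate_succ_apply', Function.iterate_succ_apply',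
        Function.iterate_succ_apply', e0, step0, step1 ε φ₁ φ₂ φ₃ φ₄ hε, step2]

end Steps

/-- Theorem 2(B): for `Δ = π/4` (`j = 0`) or `Δ = −3π/4` (`j = 1`), the quantum state of the
4-state walk with initial state `(φ₁,φ₂,φ₃,φ₄)ᵀδ₀(x)` is periodic with period 4, with the
explicit expressions at times `4m`, `4m+1`, `4m+2`, `4m+3`. -/
theorem grover_walk_period_four_states (Δ : ℝ) (j : ℕ)
    (hΔ : (Δ = π / 4 ∧ j = 0) ∨ (Δ = -3 * π / 4 ∧ j = 1))
    (φ₁ φ₂ φ₃ φ₄ : ℂ) :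
    ∀ (m : ℕ) (x : ℤ),
      ((lqwU4 (MtildeGrover Δ))^[4 * m]
          (fun z => if z = 0 then ![φ₁, φ₂, φ₃, φ₄] else 0)) x
        = dlt 0 x • ![φ₁, φ₂, φ₃, φ₄] ∧
      ((lqwU4 (MtildeGrover Δ))^[4 * m + 1]
          (fun z => if z = 0 then ![φ₁, φ₂, φ₃, φ₄] else 0)) x
        = ((-1) ^ j / 2 : ℂ) •
            (dlt (-1) x • ![φ₁ + φ₂ - φ₃ + φ₄, 0, φ₁ - φ₂ - φ₃ - φ₄, 0]
              + dlt 1 x • ![0, φ₁ + φ₂ + φ₃ - φ₄, 0, -φ₁ + φ₂ - φ₃ - φ₄]) ∧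
      ((lqwU4 (MtildeGrover Δ))^[4 * m + 2]
          (fun z => if z = 0 then ![φ₁, φ₂, φ₃, φ₄] else 0)) x
        = (1 / 2 : ℂ) •
            (dlt (-2) x • ![φ₂ + φ₄, 0, φ₂ + φ₄, 0]
              + dlt 0 x • ![φ₂ - φ₄, φ₁ - φ₃, φ₄ - φ₂, φ₃ - φ₁]
              + dlt 2 x • ![0, φ₁ + φ₃, 0, φ₁ + φ₃]) ∧
      ((lqwU4 (MtildeGrover Δ))^[4 * m + 3]
          (fun z => if z = 0 then ![φ₁, φ₂, φ₃, φ₄] else 0)) x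
        = ((-1) ^ j / 2 : ℂ) •
            (dlt (-1) x • ![φ₂ - φ₄, φ₂ + φ₄, φ₂ - φ₄, -φ₂ - φ₄]
              + dlt 1 x • ![φ₁ + φ₃, φ₁ - φ₃, -φ₁ - φ₃, φ₁ - φ₃]) := by
  have hinit : (fun z : ℤ => if z = 0 then ![φ₁, φ₂, φ₃, φ₄] else 0) = psi0 φ₁ φ₂ φ₃ φ₄ := by
    funext z
    by_cases hz : z = 0 <;> simp [psi0, dlt, hz]
  intro m x
  rcases hΔ with ⟨rfl, rfl⟩ | ⟨rfl, rfl⟩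
  · have h := key 1 φ₁ φ₂ φ₃ φ₄ (Or.inl rfl) m
    rw [hinit, M_eq_pos]
    refine ⟨?_, ?_, ?_, ?_⟩
    · rw [h.1]; rfl
    · rw [h.2.1]; simp [psi1]
    · rw [h.2.2.1]; simp [psi2]
    · rw [h.2.2.2]; simp [psi3]
  · have h := key (-1) φ₁ φ₂ φ₃ φ₄ (Or.inr rfl) m
    rw [hinit, M_eq_neg]
    refine ⟨?_, ?_, ?_, ?_⟩
    · rw [h.1]; rfl
    · rw [h.2.1]; simp [psi1]
    · rw [h.2.2.1]; simp [psi2]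
    · rw [h.2.2.2]; simp [psi3]

end
end

section
/- (Theorem 2(C).) Let Δ = 3π/4 or Δ = −π/4, let Ũ be the 4-state LQW time evolution with coin matrix M̃(Δ), and let the initial state be ψ₀(x) = (φ₁, φ₂, φ₃, φ₄)ᵀ·δ₀(x). Set j = 0 if Δ = −π/4 and j = 1 if Δ = 3π/4. Then for every even n ≥ 0 and x ∈ ℤ: (Ũⁿψ₀)(x) = (1/2)(φ₁−φ₃, 0, φ₃−φ₁, 0)ᵀ δ₋ₙ(x) + (1/2)(φ₁+φ₃, φ₂+φ₄, φ₁+φ₃, φ₂+φ₄)ᵀ δ₀(x) + (1/2)(0, φ₂−φ₄, 0, φ₄−φ₂)ᵀ δₙ(x); and for every odd n ≥ 1 and x ∈ ℤ: (Ũⁿψ₀)(x) = (−1)^j·{ (1/2)(φ₁−φ₃, 0, φ₃−φ₁, 0)ᵀ δ₋ₙ(x) − (1/2)(φ₂+φ₄, 0, φ₂+φ₄, 0)ᵀ δ₋₁(x) − (1/2)(0, φ₁+φ₃, 0, φ₁+φ₃)ᵀ δ₁(x) + (1/2)(0, φ₂−φ₄, 0, φ₄−φ₂)ᵀ δₙ(x)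 }. -/
open Matrix Real

noncomputable section

/-- The coin matrix at `Δ = -π/4`. -/
def M0 : Matrix (Fin 4) (Fin 4) ℂ :=
  !![1/2, -1/2, -1/2, -1/2; -1/2, 1/2, -1/2, -1/2;
     -1/2, -1/2, 1/2, -1/2; -1/2, -1/2, -1/2, 1/2]

lemma Mneg_eq : MtildeGrover (-π / 4) = M0 := by
  have h2 : (Real.sqrt 2 : ℂ) ≠ 0 := by
    simp only [ne_eq, Complex.ofReal_eq_zero]
    positivity
  have hc : Real.cos (-π / 4) = Real.sqrt 2 / 2 := by
    rw [neg_div, Real.cos_neg, Real.cos_pi_div_four]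
  have hs : Real.sin (-π / 4) = -(Real.sqrt 2 / 2) := by
    rw [neg_div, Real.sin_neg, Real.sin_pi_div_four]
  ext i j
  fin_cases i <;> fin_cases j <;>
    simp only [MtildeGrover, M0, hc, hs, Matrix.smul_apply, Fin.reduceFinMk, Matrix.cons_val, Matrix.cons_val_zero,
      Matrix.cons_val_one, Matrix.head_cons, Matrix.empty_val', Matrix.cons_val_fin_one,
      Matrix.head_fin_const, Matrix.cons_val_two, Matrix.cons_val_three, Matrix.tail_cons,
      Matrix.of_apply, Fin.isValue, smul_eq_mul, Complex.ofReal_neg, Complex.ofReal_div,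
      Complex.ofReal_ofNat] <;>
    field_simp

lemma Mpos_eq : MtildeGrover (3 * π / 4) = -M0 := by
  have h2 : (Real.sqrt 2 : ℂ) ≠ 0 := by
    simp only [ne_eq, Complex.ofReal_eq_zero]
    positivity
  have h34 : 3 * π / 4 = π - π / 4 := by ring
  have hc : Real.cos (3 * π / 4) = -(Real.sqrt 2 / 2) := by
    rw [h34, Real.cos_pi_sub, Real.cos_pi_div_four]
  have hs : Real.sin (3 * π / 4) = Real.sqrt 2 / 2 := by
    rw [h34, Real.sin_pi_sub, Real.sin_pi_div_four]
  ext i j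
  fin_cases i <;> fin_cases j <;>
    simp only [MtildeGrover, M0, hc, hs, Matrix.smul_apply, Matrix.neg_apply, Fin.reduceFinMk, Matrix.cons_val,
      Matrix.cons_val_zero, Matrix.cons_val_one, Matrix.head_cons, Matrix.empty_val',
      Matrix.cons_val_fin_one, Matrix.head_fin_const, Matrix.cons_val_two, Matrix.cons_val_three,
      Matrix.tail_cons, Matrix.of_apply, Fin.isValue, smul_eq_mul, Complex.ofReal_neg,
      Complex.ofReal_div, Complex.ofReal_ofNat] <;>
    field_simp

/-- The closed form of the state at time `n` for the walk with coin `M0`. -/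
def sol (φ₁ φ₂ φ₃ φ₄ : ℂ) (n : ℕ) : ℤ → Fin 4 → ℂ := fun x =>
  if Even n then
    (1 / 2 : ℂ) •
      (dlt (-(n : ℤ)) x • ![φ₁ - φ₃, 0, φ₃ - φ₁, 0]
        + dlt 0 x • ![φ₁ + φ₃, φ₂ + φ₄, φ₁ + φ₃, φ₂ + φ₄]
        + dlt (n : ℤ) x • ![0, φ₂ - φ₄, 0, φ₄ - φ₂])
  else
    (1 / 2 : ℂ) •
      (dlt (-(n : ℤ)) x • ![φ₁ - φ₃, 0, φ₃ - φ₁, 0]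
        - dlt (-1) x • ![φ₂ + φ₄, 0, φ₂ + φ₄, 0]
        - dlt 1 x • ![0, φ₁ + φ₃, 0, φ₁ + φ₃]
        + dlt (n : ℤ) x • ![0, φ₂ - φ₄, 0, φ₄ - φ₂])
set_option maxHeartbeats 1000000 in
lemma stepe0 (φ₁ φ₂ φ₃ φ₄ : ℂ) (m : ℕ) (x : ℤ) :
    lqwU4 M0 (sol φ₁ φ₂ φ₃ φ₄ (m+m)) x 0 = sol φ₁ φ₂ φ₃ φ₄ (m+m+1) x 0 := by
  have h1 : ¬ Even (m + m + 1) := by simp [Nat.even_add_one, parity_simps]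
  simp only [lqwU4, sol, M0, dlt, if_pos (Even.add_self m), if_neg h1, Pi.add_apply,
    Matrix.mulVec, dotProduct, Fin.sum_univ_four, Matrix.of_apply,
    Matrix.cons_val', Matrix.cons_val_zero, Matrix.cons_val_one, Matrix.head_cons,
    Matrix.empty_val', Matrix.cons_val_fin_one, Matrix.cons_val_two, Matrix.cons_val_three,
    Matrix.vecHead, Matrix.tail_cons, Pi.smul_apply, Pi.sub_apply,
    smul_eq_mul, Pi.zero_apply, Nat.cast_add, Nat.cast_one, Nat.cast_mul, Nat.cast_ofNat,
    zero_mul, mul_zero, add_zero, zero_add, neg_zero, sub_zero, zero_sub]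
  split_ifs <;> (first | ring1 | (exfalso; omega))

set_option maxHeartbeats 1000000 in
lemma stepo0 (φ₁ φ₂ φ₃ φ₄ : ℂ) (m : ℕ) (x : ℤ) :
    lqwU4 M0 (sol φ₁ φ₂ φ₃ φ₄ (2*m+1)) x 0 = sol φ₁ φ₂ φ₃ φ₄ (2*m+1+1) x 0 := by
  have h0 : ¬ Even (2 * m + 1) := by simp [Nat.even_add_one, parity_simps]
  have h1 : Even (2 * m + 1 + 1) := by simp [Nat.even_add_one, parity_simps]
  simp only [lqwU4, sol, M0, dlt, if_pos h1, if_neg h0, Pi.add_apply,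
    Matrix.mulVec, dotProduct, Fin.sum_univ_four, Matrix.of_apply,
    Matrix.cons_val', Matrix.cons_val_zero, Matrix.cons_val_one, Matrix.head_cons,
    Matrix.empty_val', Matrix.cons_val_fin_one, Matrix.cons_val_two, Matrix.cons_val_three,
    Matrix.vecHead, Matrix.tail_cons, Pi.smul_apply, Pi.sub_apply,
    smul_eq_mul, Pi.zero_apply, Nat.cast_add, Nat.cast_one, Nat.cast_mul, Nat.cast_ofNat,
    zero_mul, mul_zero, add_zero, zero_add, neg_zero, sub_zero, zero_sub]
  split_ifs <;> (first | ring1 | (exfalso; omega))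

set_option maxHeartbeats 1000000 in
lemma stepe1 (φ₁ φ₂ φ₃ φ₄ : ℂ) (m : ℕ) (x : ℤ) :
    lqwU4 M0 (sol φ₁ φ₂ φ₃ φ₄ (m+m)) x 1 = sol φ₁ φ₂ φ₃ φ₄ (m+m+1) x 1 := by
  have h1 : ¬ Even (m + m + 1) := by simp [Nat.even_add_one, parity_simps]
  simp only [lqwU4, sol, M0, dlt, if_pos (Even.add_self m), if_neg h1, Pi.add_apply,
    Matrix.mulVec, dotProduct, Fin.sum_univ_four, Matrix.of_apply,
    Matrix.cons_val', Matrix.cons_val_zero, Matrix.cons_val_one, Matrix.head_cons,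
    Matrix.empty_val', Matrix.cons_val_fin_one, Matrix.cons_val_two, Matrix.cons_val_three,
    Matrix.vecHead, Matrix.tail_cons, Pi.smul_apply, Pi.sub_apply,
    smul_eq_mul, Pi.zero_apply, Nat.cast_add, Nat.cast_one, Nat.cast_mul, Nat.cast_ofNat,
    zero_mul, mul_zero, add_zero, zero_add, neg_zero, sub_zero, zero_sub]
  split_ifs <;> (first | ring1 | (exfalso; omega))

set_option maxHeartbeats 1000000 in
lemma stepo1 (φ₁ φ₂ φ₃ φ₄ : ℂ) (m : ℕ) (x : ℤ) :
    lqwU4 M0 (sol φ₁ φ₂ φ₃ φ₄ (2*m+1)) x 1 = sol φ₁ φ₂ φ₃ φ₄ (2*m+1+1) x 1 := by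
  have h0 : ¬ Even (2 * m + 1) := by simp [Nat.even_add_one, parity_simps]
  have h1 : Even (2 * m + 1 + 1) := by simp [Nat.even_add_one, parity_simps]
  simp only [lqwU4, sol, M0, dlt, if_pos h1, if_neg h0, Pi.add_apply,
    Matrix.mulVec, dotProduct, Fin.sum_univ_four, Matrix.of_apply,
    Matrix.cons_val', Matrix.cons_val_zero, Matrix.cons_val_one, Matrix.head_cons,
    Matrix.empty_val', Matrix.cons_val_fin_one, Matrix.cons_val_two, Matrix.cons_val_three,
    Matrix.vecHead, Matrix.tail_cons, Pi.smul_apply, Pi.sub_apply,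
    smul_eq_mul, Pi.zero_apply, Nat.cast_add, Nat.cast_one, Nat.cast_mul, Nat.cast_ofNat,
    zero_mul, mul_zero, add_zero, zero_add, neg_zero, sub_zero, zero_sub]
  split_ifs <;> (first | ring1 | (exfalso; omega))

set_option maxHeartbeats 1000000 in
lemma stepe2 (φ₁ φ₂ φ₃ φ₄ : ℂ) (m : ℕ) (x : ℤ) :
    lqwU4 M0 (sol φ₁ φ₂ φ₃ φ₄ (m+m)) x 2 = sol φ₁ φ₂ φ₃ φ₄ (m+m+1) x 2 := by
  have h1 : ¬ Even (m + m + 1) := by simp [Nat.even_add_one, parity_simps]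
  simp only [lqwU4, sol, M0, dlt, if_pos (Even.add_self m), if_neg h1, Pi.add_apply,
    Matrix.mulVec, dotProduct, Fin.sum_univ_four, Matrix.of_apply,
    Matrix.cons_val', Matrix.cons_val_zero, Matrix.cons_val_one, Matrix.head_cons,
    Matrix.empty_val', Matrix.cons_val_fin_one, Matrix.cons_val_two, Matrix.cons_val_three,
    Matrix.vecHead, Matrix.tail_cons, Pi.smul_apply, Pi.sub_apply,
    smul_eq_mul, Pi.zero_apply, Nat.cast_add, Nat.cast_one, Nat.cast_mul, Nat.cast_ofNat,
    zero_mul, mul_zero, add_zero, zero_add, neg_zero, sub_zero, zero_sub]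
  split_ifs <;> (first | ring1 | (exfalso; omega))

set_option maxHeartbeats 1000000 in
lemma stepo2 (φ₁ φ₂ φ₃ φ₄ : ℂ) (m : ℕ) (x : ℤ) :
    lqwU4 M0 (sol φ₁ φ₂ φ₃ φ₄ (2*m+1)) x 2 = sol φ₁ φ₂ φ₃ φ₄ (2*m+1+1) x 2 := by
  have h0 : ¬ Even (2 * m + 1) := by simp [Nat.even_add_one, parity_simps]
  have h1 : Even (2 * m + 1 + 1) := by simp [Nat.even_add_one, parity_simps]
  simp only [lqwU4, sol, M0, dlt, if_pos h1, if_neg h0, Pi.add_apply,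
    Matrix.mulVec, dotProduct, Fin.sum_univ_four, Matrix.of_apply,
    Matrix.cons_val', Matrix.cons_val_zero, Matrix.cons_val_one, Matrix.head_cons,
    Matrix.empty_val', Matrix.cons_val_fin_one, Matrix.cons_val_two, Matrix.cons_val_three,
    Matrix.vecHead, Matrix.tail_cons, Pi.smul_apply, Pi.sub_apply,
    smul_eq_mul, Pi.zero_apply, Nat.cast_add, Nat.cast_one, Nat.cast_mul, Nat.cast_ofNat,
    zero_mul, mul_zero, add_zero, zero_add, neg_zero, sub_zero, zero_sub]
  split_ifs <;> (first | ring1 | (exfalso; omega))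

set_option maxHeartbeats 1000000 in
lemma stepe3 (φ₁ φ₂ φ₃ φ₄ : ℂ) (m : ℕ) (x : ℤ) :
    lqwU4 M0 (sol φ₁ φ₂ φ₃ φ₄ (m+m)) x 3 = sol φ₁ φ₂ φ₃ φ₄ (m+m+1) x 3 := by
  have h1 : ¬ Even (m + m + 1) := by simp [Nat.even_add_one, parity_simps]
  simp only [lqwU4, sol, M0, dlt, if_pos (Even.add_self m), if_neg h1, Pi.add_apply,
    Matrix.mulVec, dotProduct, Fin.sum_univ_four, Matrix.of_apply,
    Matrix.cons_val', Matrix.cons_val_zero, Matrix.cons_val_one, Matrix.head_cons,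
    Matrix.empty_val', Matrix.cons_val_fin_one, Matrix.cons_val_two, Matrix.cons_val_three,
    Matrix.vecHead, Matrix.tail_cons, Pi.smul_apply, Pi.sub_apply,
    smul_eq_mul, Pi.zero_apply, Nat.cast_add, Nat.cast_one, Nat.cast_mul, Nat.cast_ofNat,
    zero_mul, mul_zero, add_zero, zero_add, neg_zero, sub_zero, zero_sub]
  split_ifs <;> (first | ring1 | (exfalso; omega))

set_option maxHeartbeats 1000000 in
lemma stepo3 (φ₁ φ₂ φ₃ φ₄ : ℂ) (m : ℕ) (x : ℤ) :
    lqwU4 M0 (sol φ₁ φ₂ φ₃ φ₄ (2*m+1)) x 3 = sol φ₁ φ₂ φ₃ φ₄ (2*m+1+1) x 3 := by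
  have h0 : ¬ Even (2 * m + 1) := by simp [Nat.even_add_one, parity_simps]
  have h1 : Even (2 * m + 1 + 1) := by simp [Nat.even_add_one, parity_simps]
  simp only [lqwU4, sol, M0, dlt, if_pos h1, if_neg h0, Pi.add_apply,
    Matrix.mulVec, dotProduct, Fin.sum_univ_four, Matrix.of_apply,
    Matrix.cons_val', Matrix.cons_val_zero, Matrix.cons_val_one, Matrix.head_cons,
    Matrix.empty_val', Matrix.cons_val_fin_one, Matrix.cons_val_two, Matrix.cons_val_three,
    Matrix.vecHead, Matrix.tail_cons, Pi.smul_apply, Pi.sub_apply,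
    smul_eq_mul, Pi.zero_apply, Nat.cast_add, Nat.cast_one, Nat.cast_mul, Nat.cast_ofNat,
    zero_mul, mul_zero, add_zero, zero_add, neg_zero, sub_zero, zero_sub]
  split_ifs <;> (first | ring1 | (exfalso; omega))

lemma sol_main (φ₁ φ₂ φ₃ φ₄ : ℂ) (n : ℕ) :
    (lqwU4 M0)^[n] (fun z => if z = 0 then ![φ₁, φ₂, φ₃, φ₄] else 0) = sol φ₁ φ₂ φ₃ φ₄ n := by
  induction n with
  | zero =>
    funext x i
    simp only [Function.iterate_zero, id_eq, sol, Even.zero, if_true, Nat.cast_zero, neg_zero]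
    by_cases hx : x = 0
    · subst hx
      fin_cases i <;> simp [dlt] <;> ring
    · fin_cases i <;> simp [dlt, hx]
  | succ n ih =>
    rw [Function.iterate_succ_apply', ih]
    funext x i
    rcases Nat.even_or_odd n with hn | hn
    · obtain ⟨m, rfl⟩ := hn
      fin_cases i
      · exact stepe0 φ₁ φ₂ φ₃ φ₄ m x
      · exact stepe1 φ₁ φ₂ φ₃ φ₄ m x
      · exact stepe2 φ₁ φ₂ φ₃ φ₄ m x
      · exact stepe3 φ₁ φ₂ φ₃ φ₄ m x
    · obtain ⟨m, rfl⟩ := hn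
      fin_cases i
      · exact stepo0 φ₁ φ₂ φ₃ φ₄ m x
      · exact stepo1 φ₁ φ₂ φ₃ φ₄ m x
      · exact stepo2 φ₁ φ₂ φ₃ φ₄ m x
      · exact stepo3 φ₁ φ₂ φ₃ φ₄ m x

lemma lqwU4_neg_mul0 (ψ : ℤ → Fin 4 → ℂ) (c : ℂ) (x : ℤ) :
    lqwU4 (-M0) (fun y j => c * ψ y j) x 0 = -c * lqwU4 M0 ψ x 0 := by
  simp only [lqwU4, M0, Pi.add_apply, Matrix.mulVec, dotProduct, Fin.sum_univ_four,
    Matrix.of_apply, Matrix.cons_val', Matrix.cons_val_zero, Matrix.cons_val_one,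
    Matrix.head_cons, Matrix.empty_val', Matrix.cons_val_fin_one, Matrix.cons_val_two,
    Matrix.cons_val_three, Matrix.vecHead, Matrix.tail_cons, Matrix.neg_apply,
    Pi.zero_apply, zero_mul, mul_zero, add_zero, zero_add]
  ring

lemma lqwU4_neg_mul1 (ψ : ℤ → Fin 4 → ℂ) (c : ℂ) (x : ℤ) :
    lqwU4 (-M0) (fun y j => c * ψ y j) x 1 = -c * lqwU4 M0 ψ x 1 := by
  simp only [lqwU4, M0, Pi.add_apply, Matrix.mulVec, dotProduct, Fin.sum_univ_four,
    Matrix.of_apply, Matrix.cons_val', Matrix.cons_val_zero, Matrix.cons_val_one,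
    Matrix.head_cons, Matrix.empty_val', Matrix.cons_val_fin_one, Matrix.cons_val_two,
    Matrix.cons_val_three, Matrix.vecHead, Matrix.tail_cons, Matrix.neg_apply,
    Pi.zero_apply, zero_mul, mul_zero, add_zero, zero_add]
  ring

lemma lqwU4_neg_mul2 (ψ : ℤ → Fin 4 → ℂ) (c : ℂ) (x : ℤ) :
    lqwU4 (-M0) (fun y j => c * ψ y j) x 2 = -c * lqwU4 M0 ψ x 2 := by
  simp only [lqwU4, M0, Pi.add_apply, Matrix.mulVec, dotProduct, Fin.sum_univ_four,
    Matrix.of_apply, Matrix.cons_val', Matrix.cons_val_zero, Matrix.cons_val_one,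
    Matrix.head_cons, Matrix.empty_val', Matrix.cons_val_fin_one, Matrix.cons_val_two,
    Matrix.cons_val_three, Matrix.vecHead, Matrix.tail_cons, Matrix.neg_apply,
    Pi.zero_apply, zero_mul, mul_zero, add_zero, zero_add]
  ring

lemma lqwU4_neg_mul3 (ψ : ℤ → Fin 4 → ℂ) (c : ℂ) (x : ℤ) :
    lqwU4 (-M0) (fun y j => c * ψ y j) x 3 = -c * lqwU4 M0 ψ x 3 := by
  simp only [lqwU4, M0, Pi.add_apply, Matrix.mulVec, dotProduct, Fin.sum_univ_four,
    Matrix.of_apply, Matrix.cons_val', Matrix.cons_val_zero, Matrix.cons_val_one,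
    Matrix.head_cons, Matrix.empty_val', Matrix.cons_val_fin_one, Matrix.cons_val_two,
    Matrix.cons_val_three, Matrix.vecHead, Matrix.tail_cons, Matrix.neg_apply,
    Pi.zero_apply, zero_mul, mul_zero, add_zero, zero_add]
  ring

lemma lqwU4_neg_mul (ψ : ℤ → Fin 4 → ℂ) (c : ℂ) (x : ℤ) (i : Fin 4) :
    lqwU4 (-M0) (fun y j => c * ψ y j) x i = -c * lqwU4 M0 ψ x i := by
  fin_cases i
  · exact lqwU4_neg_mul0 ψ c x
  · exact lqwU4_neg_mul1 ψ c x
  · exact lqwU4_neg_mul2 ψ c x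
  · exact lqwU4_neg_mul3 ψ c x

lemma iter_neg (ψ : ℤ → Fin 4 → ℂ) (n : ℕ) :
    (lqwU4 (-M0))^[n] ψ = fun x i => (-1 : ℂ) ^ n * ((lqwU4 M0)^[n] ψ) x i := by
  induction n with
  | zero => simp
  | succ n ih =>
    rw [Function.iterate_succ_apply', Function.iterate_succ_apply', ih]
    funext x i
    calc lqwU4 (-M0) (fun y j => (-1 : ℂ) ^ n * ((lqwU4 M0)^[n] ψ) y j) x i
        = -(-1 : ℂ) ^ n * lqwU4 M0 ((lqwU4 M0)^[n] ψ) x i :=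
          lqwU4_neg_mul ((lqwU4 M0)^[n] ψ) ((-1 : ℂ) ^ n) x i
      _ = (-1 : ℂ) ^ (n + 1) * lqwU4 M0 ((lqwU4 M0)^[n] ψ) x i := by ring

/-- Theorem 2(C): for `Δ = −π/4` (`j = 0`) or `Δ = 3π/4` (`j = 1`), explicit expressions for
the quantum state of the 4-state walk with initial state `(φ₁,φ₂,φ₃,φ₄)ᵀδ₀(x)`, at even and
odd times. -/
theorem grover_walk_case_C_states (Δ : ℝ) (j : ℕ)
    (hΔ : (Δ = -π / 4 ∧ j = 0) ∨ (Δ = 3 * π / 4 ∧ j = 1))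
    (φ₁ φ₂ φ₃ φ₄ : ℂ) :
    (∀ n : ℕ, Even n → ∀ x : ℤ,
      ((lqwU4 (MtildeGrover Δ))^[n]
          (fun z => if z = 0 then ![φ₁, φ₂, φ₃, φ₄] else 0)) x
        = (1 / 2 : ℂ) •
            (dlt (-(n : ℤ)) x • ![φ₁ - φ₃, 0, φ₃ - φ₁, 0]
              + dlt 0 x • ![φ₁ + φ₃, φ₂ + φ₄, φ₁ + φ₃, φ₂ + φ₄]
              + dlt (n : ℤ) x • ![0, φ₂ - φ₄, 0, φ₄ - φ₂])) ∧
    (∀ n : ℕ, Odd n → ∀ x : ℤ,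
      ((lqwU4 (MtildeGrover Δ))^[n]
          (fun z => if z = 0 then ![φ₁, φ₂, φ₃, φ₄] else 0)) x
        = ((-1) ^ j / 2 : ℂ) •
            (dlt (-(n : ℤ)) x • ![φ₁ - φ₃, 0, φ₃ - φ₁, 0]
              - dlt (-1) x • ![φ₂ + φ₄, 0, φ₂ + φ₄, 0]
              - dlt 1 x • ![0, φ₁ + φ₃, 0, φ₁ + φ₃]
              + dlt (n : ℤ) x • ![0, φ₂ - φ₄, 0, φ₄ - φ₂])) := by
  rcases hΔ with ⟨hΔ, hj⟩ | ⟨hΔ, hj⟩ <;> subst hΔ <;> subst hj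
  · rw [Mneg_eq]
    constructor
    · intro n hn x
      rw [sol_main]
      simp only [sol, if_pos hn]
    · intro n hn x
      have hne : ¬ Even n := fun he => (Nat.not_odd_iff_even.mpr he) hn
      rw [sol_main]
      simp only [sol, if_neg hne, pow_zero]
  · rw [Mpos_eq]
    constructor
    · intro n hn x
      rw [iter_neg, sol_main]
      funext i
      simp only [Even.neg_one_pow hn, one_mul, sol, if_pos hn]
    · intro n hn x
      have hne : ¬ Even n := fun he => (Nat.not_odd_iff_even.mpr he) hn
      rw [iter_neg, sol_main]
      funext i
      simp only [Odd.neg_one_pow hn, sol, if_neg hne, pow_one, Pi.smul_apply, Pi.add_apply,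
        Pi.sub_apply, smul_eq_mul]
      ring

end
end
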